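/- Let G be a finite group, K, H ≤ G with K subconjugate to H. Then the number of W_G(K)-orbits on the set (K:G:H) = {KgH : g⁻¹Kg ⊆ H} equals the number of H-conjugacy classes of subgroups of H that are G-conjugate to K. -/

import Mathlib

lemma conj_comp {G : Type*} [Group G] (g g' : G) :
    (MulAut.conj g').toMonoidHom.comp (MulAut.conj g).toMonoidHom
      = (MulAut.conj (g' * g)).toMonoidHom := by
  ext x; simp [MulAut.conj]; group

lemma map_conj_one {G : Type*} [Group G] (A : Subgroup G) :
    Subgroup.map (MulAut.conj (1 : G)).toMonoidHom A = A := by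
  rw [map_one]; exact Subgroup.map_id A

variable {G : Type*} [Group G]

/-- Elements `g` with `g⁻¹Kg ⊆ H`, i.e. representatives of double cosets in `(K:G:H)`. -/
def Admissibles (K H : Subgroup G) : Type _ :=
  {g : G // ∀ k ∈ K, g⁻¹ * k * g ∈ H}

/-- Two admissible representatives are related iff their double cosets lie in the same
`W_G(K)`-orbit, i.e. `K(ng)H = Kg'H` for some `n ∈ N_G(K)`. -/
def weylOrbitSetoid (K H : Subgroup G) : Setoid (Admissibles K H) where
  r g g' := ∃ n ∈ (Subgroup.normalizer (K : Set G)), DoubleCoset.mk K H (n * g.1) = DoubleCoset.mk K H g'.1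
  iseqv := by
    constructor
    · exact fun g => ⟨1, (Subgroup.normalizer (K : Set G)).one_mem, by rw [one_mul]⟩
    · rintro g g' ⟨n, hn, hmk⟩
      obtain ⟨k, hk, h, hh, hEq⟩ := (DoubleCoset.eq K H (n * g.1) g'.1).mp hmk
      refine ⟨n⁻¹, (Subgroup.normalizer (K : Set G)).inv_mem hn, ?_⟩
      rw [DoubleCoset.eq]
      refine ⟨(n⁻¹ * k * n)⁻¹, K.inv_mem ?_, h⁻¹, H.inv_mem hh, ?_⟩
      · have := (Subgroup.mem_normalizer_iff.mp ((Subgroup.normalizer (K : Set G)).inv_mem hn) k).mp hk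
        rwa [inv_inv] at this
      · rw [hEq]; group
    · rintro g g' g'' ⟨n, hn, e⟩ ⟨n', hn', e'⟩
      obtain ⟨k, hk, h, hh, hEq⟩ := (DoubleCoset.eq K H (n * g.1) g'.1).mp e
      obtain ⟨k', hk', h', hh', hEq'⟩ := (DoubleCoset.eq K H (n' * g'.1) g''.1).mp e'
      refine ⟨n' * n, mul_mem hn' hn, ?_⟩
      rw [DoubleCoset.eq]
      refine ⟨k' * (n' * k * n'⁻¹), K.mul_mem hk' ((Subgroup.mem_normalizer_iff.mp hn' k).mp hk),
        h * h', H.mul_mem hh hh', ?_⟩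
      rw [hEq', hEq]; group

/-- `H`-conjugacy on the set of `G`-conjugates of `K` contained in `H`. -/
def hConjSetoid (K H : Subgroup G) :
    Setoid {L : Subgroup G //
      (∃ g : G, L = Subgroup.map (MulAut.conj g⁻¹).toMonoidHom K) ∧ L ≤ H} where
  r L L' := ∃ h ∈ H, L'.1 = Subgroup.map (MulAut.conj h⁻¹).toMonoidHom L.1
  iseqv := by
    constructor
    · exact fun L => ⟨1, H.one_mem, by rw [inv_one, map_conj_one]⟩
    · rintro L L' ⟨h, hh, e⟩
      refine ⟨h⁻¹, H.inv_mem hh, ?_⟩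
      rw [e, Subgroup.map_map, conj_comp, inv_inv, mul_inv_cancel, map_conj_one]
    · rintro L L' L'' ⟨h, hh, e⟩ ⟨h', hh', e'⟩
      refine ⟨h * h', H.mul_mem hh hh', ?_⟩
      rw [e', e, Subgroup.map_map, conj_comp, ← mul_inv_rev]

lemma map_conj_eq_iff_mem_normalizer {K : Subgroup G} {n : G} :
    Subgroup.map (MulAut.conj n).toMonoidHom K = K ↔ n ∈ (Subgroup.normalizer (K : Set G)) := by
  constructor
  · intro h
    rw [Subgroup.mem_normalizer_iff]
    intro x
    constructor
    · intro hx
      rw [← h]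
      exact ⟨x, hx, rfl⟩
    · intro hx
      rw [← h] at hx
      obtain ⟨y, hy, hxy⟩ := hx
      simp only [MulEquiv.coe_toMonoidHom, MulAut.conj_apply] at hxy
      have : y = x := by
        have := mul_left_cancel (mul_right_cancel hxy)
        exact this
      rwa [← this]
  · intro hn
    ext x
    simp only [Subgroup.mem_map, MulEquiv.coe_toMonoidHom, MulAut.conj_apply]
    constructor
    · rintro ⟨y, hy, rfl⟩
      exact (Subgroup.mem_normalizer_iff.mp hn y).mp hy
    · intro hx
      refine ⟨n⁻¹ * x * n, ?_, by group⟩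
      apply (Subgroup.mem_normalizer_iff.mp hn _).mpr
      have : n * (n⁻¹ * x * n) * n⁻¹ = x := by group
      rwa [this]

lemma map_conj_eq_of_mem {K : Subgroup G} {k : G} (hk : k ∈ K) :
    Subgroup.map (MulAut.conj k).toMonoidHom K = K :=
  map_conj_eq_iff_mem_normalizer.mpr (Subgroup.le_normalizer hk)

/-- Key characterization: the Weyl-orbit relation on admissibles corresponds to
`H`-conjugacy of the subgroups `g⁻¹Kg`. -/
lemma weyl_rel_iff_hconj (K H : Subgroup G) (g g' : Admissibles K H) :
    (weylOrbitSetoid K H).r g g' ↔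
    ∃ h ∈ H, Subgroup.map (MulAut.conj g'.1⁻¹).toMonoidHom K
      = Subgroup.map (MulAut.conj h⁻¹).toMonoidHom
          (Subgroup.map (MulAut.conj g.1⁻¹).toMonoidHom K) := by
  constructor
  · rintro ⟨n, hn, hmk⟩
    obtain ⟨k, hk, h, hh, hEq⟩ := (DoubleCoset.eq K H (n * g.1) g'.1).mp hmk
    refine ⟨h, hh, ?_⟩
    rw [Subgroup.map_map, conj_comp, hEq]
    have : (k * (n * g.1) * h)⁻¹ = (h⁻¹ * g.1⁻¹) * (n⁻¹ * k⁻¹) := by group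
    rw [this, ← conj_comp, ← Subgroup.map_map, ← conj_comp, ← Subgroup.map_map,
      ← conj_comp, ← Subgroup.map_map, map_conj_eq_of_mem (K.inv_mem hk),
      map_conj_eq_iff_mem_normalizer.mpr ((Subgroup.normalizer (K : Set G)).inv_mem hn), Subgroup.map_map]
  · rintro ⟨h, hh, e⟩
    refine ⟨g'.1 * h⁻¹ * g.1⁻¹, ?_, ?_⟩
    · rw [← map_conj_eq_iff_mem_normalizer]
      rw [Subgroup.map_map, conj_comp] at e
      have h1 : g'.1 * h⁻¹ * g.1⁻¹ = g'.1 * (h⁻¹ * g.1⁻¹) := by group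
      rw [h1, ← conj_comp, ← Subgroup.map_map, ← e, Subgroup.map_map, conj_comp,
        mul_inv_cancel]
      exact map_conj_one K
    · rw [DoubleCoset.eq]
      refine ⟨1, K.one_mem, h, hh, by group⟩

/-- For `K` subconjugate to `H`, the number of `W_G(K)`-orbits on
`(K:G:H) = {KgH : g⁻¹Kg ⊆ H}` equals the number of `H`-conjugacy classes of subgroups of `H`
that are `G`-conjugate to `K`. -/
theorem card_weyl_orbits_eq_card_hconj_classes {G : Type*} [Group G] [Fintype G]
    (K H : Subgroup G) (hsub : ∃ g : G, ∀ k ∈ K, g⁻¹ * k * g ∈ H) :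
    Nat.card (Quotient (weylOrbitSetoid K H)) =
      Nat.card (Quotient (hConjSetoid K H)) := by
  clear hsub
  have hle : ∀ g : Admissibles K H,
      Subgroup.map (MulAut.conj g.1⁻¹).toMonoidHom K ≤ H := by
    rintro g x ⟨k, hk, rfl⟩
    simpa [mul_assoc] using g.2 k hk
  let f : Admissibles K H →
      {L : Subgroup G //
        (∃ g : G, L = Subgroup.map (MulAut.conj g⁻¹).toMonoidHom K) ∧ L ≤ H} :=
    fun g => ⟨Subgroup.map (MulAut.conj g.1⁻¹).toMonoidHom K, ⟨g.1, rfl⟩, hle g⟩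
  let F : Quotient (weylOrbitSetoid K H) → Quotient (hConjSetoid K H) :=
    Quotient.map f (fun g g' hrel => (weyl_rel_iff_hconj K H g g').mp hrel)
  have hbij : Function.Bijective F := by
    constructor
    · rintro ⟨a⟩ ⟨b⟩ hab
      exact Quotient.sound <| (weyl_rel_iff_hconj K H a b).mpr (Quotient.exact hab)
    · rintro ⟨⟨L, ⟨g, hLg⟩, hLH⟩⟩
      have hadm : ∀ k ∈ K, g⁻¹ * k * g ∈ H := by
        intro k hk
        apply hLH
        rw [hLg]
        exact ⟨k, hk, by simp [mul_assoc]⟩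
      refine ⟨Quotient.mk _ ⟨g, hadm⟩, ?_⟩
      apply Quotient.sound
      exact ⟨1, H.one_mem, by rw [inv_one, map_conj_one]; exact hLg⟩
  exact Nat.card_eq_of_bijective F hbij
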